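/- Let 𝒫 be a set of prime numbers and let C = ℤ[𝒫⁻¹] be the subring of ℚ generated by {1/p : p ∈ 𝒫}, regarded as an additive abelian group. If D is a torsion-free abelian group that is virtually isomorphic to C, then D is isomorphic to C. -/

import Mathlib

/-- The subring `ℤ[𝒫⁻¹]` of `ℚ` generated by the inverses of the primes in `𝒫`. -/
noncomputable def PRing (P : Set ℕ) : Subring ℚ :=
  Subring.closure {x : ℚ | ∃ p ∈ P, x = (p : ℚ)⁻¹}

/-- Two additive groups are virtually isomorphic if they admit finite index subgroups which
become isomorphic after quotienting by finite normal subgroups. -/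
def AddVirtuallyIsomorphic (G H : Type*) [AddGroup G] [AddGroup H] : Prop :=
  ∃ (G₁ : AddSubgroup G) (H₁ : AddSubgroup H) (N : AddSubgroup G₁) (S : AddSubgroup H₁)
    (_ : N.Normal) (_ : S.Normal),
    G₁.FiniteIndex ∧ H₁.FiniteIndex ∧ Finite N ∧ Finite S ∧
    Nonempty ((G₁ ⧸ N) ≃+ (H₁ ⧸ S))

namespace PRingProof

variable {P : Set ℕ}

/-- `s` is a nonzero natural all of whose prime factors lie in `P`. -/
def IsPNum (P : Set ℕ) (s : ℕ) : Prop := s ≠ 0 ∧ ∀ q : ℕ, q.Prime → q ∣ s → q ∈ P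

lemma IsPNum.of_dvd {s t : ℕ} (h : IsPNum P s) (ht : t ≠ 0) (hd : t ∣ s) : IsPNum P t :=
  ⟨ht, fun q hq hqd => h.2 q hq (hqd.trans hd)⟩

lemma inv_mem (hP : ∀ p ∈ P, p.Prime) : ∀ s : ℕ, IsPNum P s → ((s : ℚ))⁻¹ ∈ PRing P := by
  intro s
  induction s using Nat.strong_induction_on with
  | _ s ih =>
    intro hs
    rcases eq_or_ne s 1 with rfl | h1
    · simpa using Subring.one_mem (PRing P)
    · have hs0 : s ≠ 0 := hs.1
      have hp : s.minFac.Prime := Nat.minFac_prime h1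
      have hpd : s.minFac ∣ s := Nat.minFac_dvd s
      obtain ⟨t, ht⟩ := hpd
      have hpP : s.minFac ∈ P := hs.2 _ hp ⟨t, ht⟩
      have htnz : t ≠ 0 := by rintro rfl; rw [mul_zero] at ht; exact hs0 ht
      have h2t : 2 * t ≤ s := by rw [ht]; exact Nat.mul_le_mul_right t hp.two_le
      have hlt : t < s := by omega
      have htP : IsPNum P t := hs.of_dvd htnz (Dvd.intro_left _ ht.symm)
      have hmem1 : ((s.minFac : ℚ))⁻¹ ∈ PRing P := Subring.subset_closure ⟨_, hpP, rfl⟩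
      have hmem2 := ih t hlt htP
      have heq : ((s : ℚ))⁻¹ = (s.minFac : ℚ)⁻¹ * (t : ℚ)⁻¹ := by
        conv_lhs => rw [ht]
        push_cast
        rw [mul_inv]
      rw [heq]; exact Subring.mul_mem _ hmem1 hmem2

lemma mem_of_den (hP : ∀ p ∈ P, p.Prime) {x : ℚ}
    (h : ∀ q : ℕ, q.Prime → q ∣ x.den → q ∈ P) : x ∈ PRing P := by
  have hden : IsPNum P x.den := ⟨x.den_nz, h⟩
  have h1 : ((x.den : ℚ))⁻¹ ∈ PRing P := inv_mem hP x.den hden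
  have h2 : ((x.num : ℚ)) ∈ PRing P := intCast_mem _ _
  have heq : x = (x.num : ℚ) * ((x.den : ℚ))⁻¹ := by
    rw [← div_eq_mul_inv]; exact (Rat.num_div_den x).symm
  rw [heq]; exact Subring.mul_mem _ h2 h1

lemma prime_dvd_den_mem (hP : ∀ p ∈ P, p.Prime) {x : ℚ} (hx : x ∈ PRing P) :
    ∀ q : ℕ, q.Prime → q ∣ x.den → q ∈ P := by
  induction hx using Subring.closure_induction with
  | mem x hx =>
    obtain ⟨p, hpP, rfl⟩ := hx
    intro q hq hqd
    have hp := hP p hpP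
    have hdvd : (((p : ℚ))⁻¹.den : ℤ) ∣ (p : ℤ) := by
      have : ((p : ℚ))⁻¹ = Rat.divInt 1 (p : ℤ) := by
        rw [Rat.divInt_eq_div]; push_cast; rw [one_div]
      rw [this]; exact Rat.den_dvd 1 (p : ℤ)
    have hdp : ((p : ℚ))⁻¹.den ∣ p := Int.ofNat_dvd.mp hdvd
    have : q = p := (Nat.prime_dvd_prime_iff_eq hq hp).mp (hqd.trans hdp)
    exact this ▸ hpP
  | zero => intro q hq hqd; simp at hqd; exact absurd hqd hq.ne_one
  | one => intro q hq hqd; simp at hqd; exact absurd hqd hq.ne_one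
  | add x y hx hy ihx ihy =>
    intro q hq hqd
    have := hqd.trans (Rat.add_den_dvd x y)
    rcases hq.dvd_mul.mp this with h | h
    · exact ihx q hq h
    · exact ihy q hq h
  | neg x hx ihx => intro q hq hqd; rw [Rat.neg_den] at hqd; exact ihx q hq hqd
  | mul x y hx hy ihx ihy =>
    intro q hq hqd
    have := hqd.trans (Rat.mul_den_dvd x y)
    rcases hq.dvd_mul.mp this with h | h
    · exact ihx q hq h
    · exact ihy q hq h

lemma key (hP : ∀ p ∈ P, p.Prime) (F : AddSubgroup ℚ) (r : ℕ) (hr : r ≠ 0)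
    (hsub : ∀ x ∈ F, x ∈ PRing P)
    (hlow : ∀ x : ℚ, x ∈ PRing P → r • x ∈ F) :
    Nonempty (↥F ≃+ ↥(PRing P)) := by
  obtain ⟨a, ha⟩ := Int.subgroup_cyclic (AddSubgroup.comap (Int.castAddHom ℚ) F)
  have hmem : ∀ n : ℤ, (n : ℚ) ∈ F ↔ a ∣ n := by
    intro n
    have h0 : ((n : ℚ) ∈ F) ↔ n ∈ AddSubgroup.comap (Int.castAddHom ℚ) F := Iff.rfl
    rw [h0, ha, AddSubgroup.mem_closure_singleton]
    constructor
    · rintro ⟨k, rfl⟩; exact Dvd.intro_left k (by simp [zsmul_eq_mul])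
    · rintro ⟨k, rfl⟩; exact ⟨k, by simp [zsmul_eq_mul, mul_comm]⟩
  obtain ⟨d, hd_def⟩ : ∃ d : ℕ, d = a.natAbs := ⟨_, rfl⟩
  have hmemd : ∀ n : ℤ, (n : ℚ) ∈ F ↔ (d : ℤ) ∣ n := by
    intro n; rw [hmem n, hd_def, Int.natAbs_dvd]
  have hrF : (((r : ℤ)) : ℚ) ∈ F := by
    have := hlow 1 (Subring.one_mem _)
    rw [nsmul_eq_mul, mul_one] at this
    exact_mod_cast this
  have hdr : (d : ℤ) ∣ (r : ℤ) := (hmemd r).mp hrF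
  have hdrn : d ∣ r := Int.ofNat_dvd.mp hdr
  have hdn : d ≠ 0 := by
    rintro rfl; rw [Nat.zero_dvd] at hdrn; exact hr hdrn
  obtain ⟨u, hu⟩ := hdrn
  have hun : u ≠ 0 := by rintro rfl; rw [mul_zero] at hu; exact hr hu
  have hdF : ((d : ℚ)) ∈ F := by
    have := (hmemd d).mpr dvd_rfl; exact_mod_cast this
  -- the key divisibility step
  have step : ∀ u : ℕ, u ≠ 0 → (∀ σ : ℕ, IsPNum P σ → (d : ℚ) * u / σ ∈ F) →
      ∀ s : ℕ, IsPNum P s → (d : ℚ) / s ∈ F := by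
    intro u
    induction u using Nat.strong_induction_on with
    | _ u ih =>
      intro hu0 hdiv s hs
      by_cases hcase : ∃ p : ℕ, p.Prime ∧ p ∈ P ∧ p ∣ u
      · obtain ⟨p, hp, hpP, hpd⟩ := hcase
        obtain ⟨u', rfl⟩ := hpd
        have hu' : u' ≠ 0 := by rintro rfl; rw [mul_zero] at hu0; exact hu0 rfl
        have h2u : 2 * u' ≤ p * u' := Nat.mul_le_mul_right u' hp.two_le
        have hlt : u' < p * u' := by omega
        refine ih u' hlt hu' ?_ s hs
        intro σ hσ
        have hσP : IsPNum P (p * σ) :=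
          ⟨Nat.mul_ne_zero hp.pos.ne' hσ.1, fun q hq hqd => by
            rcases hq.dvd_mul.mp hqd with h | h
            · exact ((Nat.prime_dvd_prime_iff_eq hq hp).mp h) ▸ hpP
            · exact hσ.2 q hq h⟩
        have hmem1 := hdiv (p * σ) hσP
        have hp0 : (p : ℚ) ≠ 0 := Nat.cast_ne_zero.mpr hp.pos.ne'
        have hσ0 : (σ : ℚ) ≠ 0 := Nat.cast_ne_zero.mpr hσ.1
        have heq : (d : ℚ) * ((p * u' : ℕ) : ℚ) / ((p * σ : ℕ) : ℚ)
            = (d : ℚ) * (u' : ℚ) / (σ : ℚ) := by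
          push_cast; field_simp
        rwa [heq] at hmem1
      · push_neg at hcase
        have hcop : Nat.gcd u s = 1 := by
          by_contra hg
          have hgn : Nat.gcd u s ≠ 0 := fun h => hu0 (Nat.eq_zero_of_gcd_eq_zero_left h)
          have hq : (Nat.gcd u s).minFac.Prime := Nat.minFac_prime hg
          have hqu : (Nat.gcd u s).minFac ∣ u := (Nat.minFac_dvd _).trans (Nat.gcd_dvd_left u s)
          have hqs : (Nat.gcd u s).minFac ∣ s := (Nat.minFac_dvd _).trans (Nat.gcd_dvd_right u s)
          exact hcase _ hq (hs.2 _ hq hqs) hqu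
        have hbez := Nat.gcd_eq_gcd_ab u s
        rw [hcop] at hbez
        have h1 : (u : ℚ) * ((Nat.gcdA u s : ℤ) : ℚ) + (s : ℚ) * ((Nat.gcdB u s : ℤ) : ℚ) = 1 := by
          exact_mod_cast hbez.symm
        have hmem1 : (d : ℚ) * u / s ∈ F := hdiv s hs
        have hmem2 : Nat.gcdA u s • ((d : ℚ) * u / s) + Nat.gcdB u s • ((d : ℚ)) ∈ F :=
          AddSubgroup.add_mem F (AddSubgroup.zsmul_mem F hmem1 _) (AddSubgroup.zsmul_mem F hdF _)
        have hs0 : (s : ℚ) ≠ 0 := Nat.cast_ne_zero.mpr hs.1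
        have heq : Nat.gcdA u s • ((d : ℚ) * u / s) + Nat.gcdB u s • ((d : ℚ))
            = (d : ℚ) / s := by
          rw [zsmul_eq_mul, zsmul_eq_mul]
          field_simp
          linear_combination h1
        rwa [heq] at hmem2
  have hstep : ∀ s : ℕ, IsPNum P s → (d : ℚ) / s ∈ F := by
    refine step u hun ?_
    intro σ hσ
    have h := hlow ((σ : ℚ))⁻¹ (inv_mem hP σ hσ)
    have heq : r • ((σ : ℚ))⁻¹ = (d : ℚ) * u / σ := by
      rw [nsmul_eq_mul, hu]; push_cast; ring
    rwa [heq] at h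
  have hd0 : (d : ℚ) ≠ 0 := Nat.cast_ne_zero.mpr hdn
  -- d * C ⊆ F
  have hmul_mem : ∀ c : ℚ, c ∈ PRing P → (d : ℚ) * c ∈ F := by
    intro c hc
    have hden : IsPNum P c.den := ⟨c.den_nz, prime_dvd_den_mem hP hc⟩
    have h1 : (d : ℚ) / c.den ∈ F := hstep c.den hden
    have hden0 : (c.den : ℚ) ≠ 0 := Nat.cast_ne_zero.mpr c.den_nz
    have hcnum : ((c.den : ℚ)) * c = (c.num : ℚ) := by exact_mod_cast Rat.den_mul_eq_num c
    have heq : c.num • ((d : ℚ) / c.den) = (d : ℚ) * c := by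
      rw [zsmul_eq_mul]
      field_simp
      linear_combination -hcnum
    exact heq ▸ AddSubgroup.zsmul_mem F h1 c.num
  -- build the equivalence
  let g : ↥(PRing P) →+ ↥F :=
    { toFun := fun c => (⟨(d : ℚ) * (c : ℚ), hmul_mem (c : ℚ) c.2⟩ : ↥F)
      map_zero' := Subtype.ext (by simp)
      map_add' := fun x y => Subtype.ext (by push_cast; ring) }
  have hg1 : Function.Injective g := by
    intro x y hxy
    have h1 : (d : ℚ) * (x : ℚ) = (d : ℚ) * (y : ℚ) := congrArg Subtype.val hxy
    exact Subtype.ext (mul_left_cancel₀ hd0 h1)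
  have hg2 : Function.Surjective g := by
    rintro ⟨x, hxF⟩
    have hxC := hsub x hxF
    have hden := prime_dvd_den_mem hP hxC
    have hnum : ((x.num : ℚ)) ∈ F := by
      have h1 : x.den • x ∈ F := AddSubgroup.nsmul_mem F hxF x.den
      have heq : x.den • x = ((x.num : ℚ)) := by
        rw [nsmul_eq_mul]; exact_mod_cast Rat.den_mul_eq_num x
      rwa [heq] at h1
    obtain ⟨e, he⟩ := (hmemd x.num).mp hnum
    have hcmem : (e : ℚ) / (x.den : ℚ) ∈ PRing P := by
      apply mem_of_den hP
      intro q hq hqd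
      have heq2 : (e : ℚ) / (x.den : ℚ) = Rat.divInt e (x.den : ℤ) := by
        rw [Rat.divInt_eq_div]; push_cast; ring
      have hdvd : (((e : ℚ) / (x.den : ℚ)).den : ℤ) ∣ ((x.den : ℕ) : ℤ) := by
        rw [heq2]; exact Rat.den_dvd e (x.den : ℤ)
      exact hden q hq (hqd.trans (Int.ofNat_dvd.mp hdvd))
    refine ⟨⟨(e : ℚ) / (x.den : ℚ), hcmem⟩, ?_⟩
    apply Subtype.ext
    show (d : ℚ) * ((e : ℚ) / (x.den : ℚ)) = x
    have he' : ((x.num : ℚ)) = (d : ℚ) * (e : ℚ) := by exact_mod_cast he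
    rw [← mul_div_assoc, ← he']
    exact Rat.num_div_den x
  exact ⟨(AddEquiv.ofBijective g ⟨hg1, hg2⟩).symm⟩

end PRingProof

set_option maxHeartbeats 1000000 in
set_option synthInstance.maxHeartbeats 400000 in
open PRingProof in
/-- If `D` is a torsion-free abelian group which is virtually isomorphic to `C = ℤ[𝒫⁻¹]`,
then `D ≅ C`. -/
theorem addEquiv_PRing_of_virtuallyIsomorphic (P : Set ℕ) (hP : ∀ p ∈ P, p.Prime)
    (D : Type*) [AddCommGroup D] (htf : ∀ d : D, IsOfFinAddOrder d → d = 0)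
    (hvi : AddVirtuallyIsomorphic D ↥(PRing P)) :
    Nonempty (D ≃+ ↥(PRing P)) := by
  obtain ⟨D₁, C₁, N, S, hNn, hSn, hD₁fi, hC₁fi, hNfin, hSfin, ⟨e₀⟩⟩ := hvi
  haveI := hD₁fi
  haveI := hC₁fi
  haveI := hNfin
  haveI := hSfin
  -- N = ⊥ since D is torsion free
  have hN : N = ⊥ := by
    rw [AddSubgroup.eq_bot_iff_forall]
    intro x hx
    have h1 : IsOfFinAddOrder (⟨x, hx⟩ : ↥N) := isOfFinAddOrder_of_finite _
    have h2 : IsOfFinAddOrder ((D₁.subtype.comp N.subtype) ⟨x, hx⟩) :=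
      (D₁.subtype.comp N.subtype).isOfFinAddOrder h1
    have h3 : ((x : ↥D₁) : D) = 0 := htf _ h2
    exact ZeroMemClass.coe_eq_zero.mp h3
  -- S = ⊥ since ℚ is torsion free
  have hS : S = ⊥ := by
    rw [AddSubgroup.eq_bot_iff_forall]
    intro x hx
    have h1 : IsOfFinAddOrder (⟨x, hx⟩ : ↥S) := isOfFinAddOrder_of_finite _
    have h2 : IsOfFinAddOrder
        (((PRing P).subtype.toAddMonoidHom.comp (C₁.subtype.comp S.subtype)) ⟨x, hx⟩) :=
      _root_.AddMonoidHom.isOfFinAddOrder _ h1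
    obtain ⟨n, hn, h0⟩ := isOfFinAddOrder_iff_nsmul_eq_zero.mp h2
    have hq : (((x : ↥C₁) : ↥(PRing P)) : ℚ) = 0 := by
      have hn0 : (n : ℚ) ≠ 0 := Nat.cast_ne_zero.mpr hn.ne'
      have h0' := h0
      rw [nsmul_eq_mul] at h0'
      exact (mul_eq_zero.mp h0').resolve_left hn0
    exact ZeroMemClass.coe_eq_zero.mp (ZeroMemClass.coe_eq_zero.mp hq)
  subst hN
  subst hS
  -- upgrade to an isomorphism D₁ ≃+ C₁
  have e : ↥D₁ ≃+ ↥C₁ :=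
    (QuotientAddGroup.quotientBot (G := ↥D₁)).symm.trans
      (e₀.trans (QuotientAddGroup.quotientBot (G := ↥C₁)))
  have hn : D₁.index ≠ 0 := AddSubgroup.FiniteIndex.index_ne_zero
  have hm : C₁.index ≠ 0 := AddSubgroup.FiniteIndex.index_ne_zero
  -- the multiplication-by-index map D →+ D₁
  obtain ⟨f1, hf1⟩ : ∃ f1 : D →+ ↥D₁, ∀ x : D, ((f1 x : ↥D₁) : D) = D₁.index • x :=
    ⟨{ toFun := fun x => ⟨D₁.index • x, D₁.nsmul_index_mem x⟩
       map_zero' := Subtype.ext (smul_zero _)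
       map_add' := fun a b => Subtype.ext (smul_add _ a b) }, fun _ => rfl⟩
  -- the embedding D →+ ℚ landing inside PRing P
  obtain ⟨ι, hιs⟩ : ∃ ι : D →+ ℚ, ∀ a : D, ι a = ((e (f1 a) : ↥(PRing P)) : ℚ) :=
    ⟨((PRing P).subtype.toAddMonoidHom.comp C₁.subtype).comp (e.toAddMonoidHom.comp f1),
      fun _ => rfl⟩
  have hιinj : Function.Injective ι := by
    rw [injective_iff_map_eq_zero]
    intro a ha
    rw [hιs a] at ha
    have h2 : e (f1 a) = 0 :=
      ZeroMemClass.coe_eq_zero.mp (ZeroMemClass.coe_eq_zero.mp ha)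
    have h3 : f1 a = 0 := (AddEquiv.map_eq_zero_iff e).mp h2
    have h4 : D₁.index • a = 0 := by
      have h5 := congrArg (Subtype.val) h3
      rw [hf1] at h5
      simpa using h5
    exact htf a (isOfFinAddOrder_iff_nsmul_eq_zero.mpr
      ⟨D₁.index, Nat.pos_of_ne_zero hn, h4⟩)
  have hsub : ∀ x ∈ ι.range, x ∈ PRing P := by
    rintro x ⟨a, rfl⟩
    rw [hιs a]
    exact SetLike.coe_mem _
  have hlow : ∀ q : ℚ, q ∈ PRing P → (D₁.index * C₁.index) • q ∈ ι.range := by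
    intro q hq
    have h1 : C₁.index • (⟨q, hq⟩ : ↥(PRing P)) ∈ C₁ :=
      C₁.nsmul_index_mem (⟨q, hq⟩ : ↥(PRing P))
    refine ⟨((e.symm ⟨_, h1⟩ : ↥D₁) : D), ?_⟩
    rw [hιs]
    have h2 : f1 ((e.symm ⟨_, h1⟩ : ↥D₁) : D) = D₁.index • (e.symm ⟨_, h1⟩) := by
      apply Subtype.ext
      rw [hf1]
      rfl
    rw [h2, map_nsmul, e.apply_symm_apply]
    show D₁.index • (C₁.index • q) = (D₁.index * C₁.index) • q
    rw [mul_smul]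
  have hr : D₁.index * C₁.index ≠ 0 := Nat.mul_ne_zero hn hm
  obtain ⟨e2⟩ := key hP ι.range (D₁.index * C₁.index) hr hsub hlow
  exact ⟨(AddMonoidHom.ofInjective hιinj).trans e2⟩
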